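/- If a partial sub-chain M' of a Markov chain M satisfies Pr^{M'}(◇T | ¬◇U) ≥ λ, then Pr^{M}(◇T | ¬◇U) ≥ λ, where M' is obtained from M by making expandable states absorbing, T and U contain no expandable states, and the conditional probability is defined as Pr(◇T ∧ ¬◇U)/(1 − Pr(◇U)) with the convention that the inequality holds vacuously only when the denominator is positive in both chains. -/

import Mathlib

open scoped ENNReal Classical

/-- Probability of hitting the set `T` within `n` steps, starting from a given state,
for the transition function `P` (standard value iteration for reachability). -/
noncomputable def hitVal {S : Type*} (P : S → S → ℝ≥0∞) (T : Set S) : ℕ → S → ℝ≥0∞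
  | 0, s => if s ∈ T then 1 else 0
  | n + 1, s => if s ∈ T then 1 else ∑' t, P s t * hitVal P T n t

/-- Probability of eventually hitting the set `T`, starting from `s`. -/
noncomputable def hitProb {S : Type*} (P : S → S → ℝ≥0∞) (T : Set S) (s : S) : ℝ≥0∞ :=
  ⨆ n, hitVal P T n s

/-- Probability of hitting `T` within `n` steps while avoiding `U`, starting from a
given state (constrained reachability `◇T ∧ ¬◇U`). -/
noncomputable def chitVal {S : Type*} (P : S → S → ℝ≥0∞) (T U : Set S) : ℕ → S → ℝ≥0∞
  | 0, s => if s ∈ U then 0 else if s ∈ T then 1 else 0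
  | n + 1, s => if s ∈ U then 0 else if s ∈ T then 1 else ∑' t, P s t * chitVal P T U n t

/-- Probability of eventually hitting `T` before ever visiting `U`, starting from `s`. -/
noncomputable def chitProb {S : Type*} (P : S → S → ℝ≥0∞) (T U : Set S) (s : S) : ℝ≥0∞ :=
  ⨆ n, chitVal P T U n s

/-- Expected reward accumulated within `n` steps before hitting the target set `T`
(the reward of a state is earned upon leaving it). -/
noncomputable def erVal {S : Type*} (P : S → S → ℝ≥0∞) (rew : S → ℝ≥0∞) (T : Set S) :
    ℕ → S → ℝ≥0∞
  | 0, _ => 0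
  | n + 1, s => if s ∈ T then 0 else rew s + ∑' t, P s t * erVal P rew T n t

/-- Total expected reward accumulated until hitting `T`, starting from `s`
(paths never reaching `T` contribute their full accumulated reward). -/
noncomputable def erProb {S : Type*} (P : S → S → ℝ≥0∞) (rew : S → ℝ≥0∞) (T : Set S)
    (s : S) : ℝ≥0∞ :=
  ⨆ n, erVal P rew T n s

/-- A state of `S'` is expandable if it has a transition of `P` leaving `S'`. -/
def Expandable {S : Type*} (P : S → S → ℝ≥0∞) (S' : Set S) (s : S) : Prop :=
  s ∈ S' ∧ ∃ t, t ∉ S' ∧ P s t ≠ 0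

/-- `P'` is the transition function of the partial sub-chain of `P` determined by the
subset `S'`: every expandable state gets a self-loop with probability 1, and all
other states of `S'` keep their transitions. -/
def IsPartialOf {S : Type*} (P' P : S → S → ℝ≥0∞) (S' : Set S) : Prop :=
  (∀ s, Expandable P S' s → ∀ t, P' s t = if t = s then 1 else 0) ∧
  (∀ s ∈ S', ¬ Expandable P S' s → ∀ t, P' s t = P s t)

section Aux
variable {S : Type*}

lemma selfloop_tsum (f : S → ℝ≥0∞) (s : S) :
    ∑' t, (if t = s then (1:ℝ≥0∞) else 0) * f t = f s := by
  have : ∀ t, (if t = s then (1:ℝ≥0∞) else 0) * f t = if t = s then f s else 0 := by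
    intro t; by_cases h : t = s <;> simp [h]
  simp only [this]
  exact tsum_ite_eq s (fun _ => f s)

lemma hitVal_mono {P : S → S → ℝ≥0∞} {T : Set S} :
    ∀ n s, hitVal P T n s ≤ hitVal P T (n + 1) s := by
  intro n
  induction n with
  | zero => intro s; by_cases h : s ∈ T <;> simp [hitVal, h]
  | succ n ih =>
      intro s
      by_cases h : s ∈ T
      · simp [hitVal, h]
      · simp only [hitVal, if_neg h]
        exact ENNReal.tsum_le_tsum fun t => mul_le_mul_right (ih t) _

lemma chitVal_mono {P : S → S → ℝ≥0∞} {T U : Set S} :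
    ∀ n s, chitVal P T U n s ≤ chitVal P T U (n + 1) s := by
  intro n
  induction n with
  | zero =>
      intro s
      by_cases hU : s ∈ U
      · simp [chitVal, hU]
      · by_cases hT : s ∈ T <;> simp [chitVal, hU, hT]
  | succ n ih =>
      intro s
      by_cases hU : s ∈ U
      · simp [chitVal, hU]
      · by_cases hT : s ∈ T
        · simp [chitVal, hU, hT]
        · simp only [chitVal, if_neg hU, if_neg hT]
          exact ENNReal.tsum_le_tsum fun t => mul_le_mul_right (ih t) _

lemma step_le {P P' : S → S → ℝ≥0∞} {S' : Set S} (hpart : IsPartialOf P' P S')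
    {s : S} (hs : s ∈ S') (hne : ¬ Expandable P S' s) {f g : S → ℝ≥0∞}
    (hfg : ∀ t ∈ S', f t ≤ g t) :
    ∑' t, P' s t * f t ≤ ∑' t, P s t * g t := by
  refine ENNReal.tsum_le_tsum fun t => ?_
  rw [hpart.2 s hs hne t]
  by_cases h0 : P s t = 0
  · simp [h0]
  · have ht : t ∈ S' := by
      by_contra ht
      exact hne ⟨hs, t, ht, h0⟩
    exact mul_le_mul_right (hfg t ht) _

lemma key {P P' : S → S → ℝ≥0∞} {S' : Set S} (hpart : IsPartialOf P' P S')
    {T U : Set S} (hTexp : ∀ s ∈ T, ¬ Expandable P S' s)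
    (hUexp : ∀ s ∈ U, ¬ Expandable P S' s) :
    ∀ n, ∀ s ∈ S', chitVal P' T U n s ≤ chitVal P T U n s ∧
        hitVal P' U n s ≤ hitVal P U n s := by
  intro n
  induction n with
  | zero => intro s _; exact ⟨le_refl _, le_refl _⟩
  | succ n ih =>
      intro s hs
      constructor
      · by_cases hU : s ∈ U
        · simp [chitVal, hU]
        · by_cases hT : s ∈ T
          · simp [chitVal, hU, hT]
          · simp only [chitVal, if_neg hU, if_neg hT]
            by_cases hexp : Expandable P S' s
            · have hP'eq : ∀ t, P' s t = if t = s then 1 else 0 := hpart.1 s hexp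
              calc ∑' t, P' s t * chitVal P' T U n t
                  = chitVal P' T U n s := by
                    simp only [hP'eq]; exact selfloop_tsum _ s
                _ ≤ chitVal P T U n s := (ih s hs).1
                _ ≤ chitVal P T U (n + 1) s := chitVal_mono n s
                _ = ∑' t, P s t * chitVal P T U n t := by
                    simp only [chitVal, if_neg hU, if_neg hT]
            · exact step_le hpart hs hexp fun t ht => (ih t ht).1
      · by_cases hU : s ∈ U
        · simp [hitVal, hU]
        · simp only [hitVal, if_neg hU]
          by_cases hexp : Expandable P S' s
          · have hP'eq : ∀ t, P' s t = if t = s then 1 else 0 := hpart.1 s hexp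
            calc ∑' t, P' s t * hitVal P' U n t
                = hitVal P' U n s := by
                  simp only [hP'eq]; exact selfloop_tsum _ s
              _ ≤ hitVal P U n s := (ih s hs).2
              _ ≤ hitVal P U (n + 1) s := hitVal_mono n s
              _ = ∑' t, P s t * hitVal P U n t := by
                  simp only [hitVal, if_neg hU]
          · exact step_le hpart hs hexp fun t ht => (ih t ht).2

end Aux

/-- If a partial sub-chain `M'` of a countable-state Markov chain `M` (expandable states
made absorbing; `T` and `U` contain no expandable states) satisfies
`Pr^{M'}(◇T | ¬◇U) ≥ λ`, where the conditional probability is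
`Pr(◇T ∧ ¬◇U) / (1 - Pr(◇U))` and both denominators are positive
(`Pr(◇U) < 1` in both chains), then `Pr^{M}(◇T | ¬◇U) ≥ λ`. -/


theorem stmt_11 {S : Type*} [Countable S] (P P' : S → S → ℝ≥0∞)
    (hP : ∀ s, ∑' t, P s t = 1) (hP' : ∀ s, ∑' t, P' s t = 1)
    (S' : Set S) (init : S) (hinit : init ∈ S')
    (hpart : IsPartialOf P' P S')
    (T U : Set S) (hTU : Disjoint T U) (hT : T ⊆ S') (hU : U ⊆ S')
    (hTexp : ∀ s ∈ T, ¬ Expandable P S' s) (hUexp : ∀ s ∈ U, ¬ Expandable P S' s)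
    (hden' : hitProb P' U init < 1) (hden : hitProb P U init < 1)
    (lam : ℝ≥0∞)
    (hlb : lam ≤ chitProb P' T U init / (1 - hitProb P' U init)) :
    lam ≤ chitProb P T U init / (1 - hitProb P U init) := by
  have hc : chitProb P' T U init ≤ chitProb P T U init := by
    simp only [chitProb]
    exact iSup_mono fun n => (key hpart hTexp hUexp n init hinit).1
  have hh : hitProb P' U init ≤ hitProb P U init := by
    simp only [hitProb]
    exact iSup_mono fun n => (key hpart hTexp hUexp n init hinit).2
  refine hlb.trans (ENNReal.div_le_div hc (tsub_le_tsub_left hh 1))
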